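/- Let A, B, C, D partition X with sizes a, b, c, d. Define p_{AB} = Σ_{{U,V}} w(AB)_{U|V} · δ_{U|V}, where the sum is over the six unordered pairs of distinct sets from {A,B,C,D} and w(AB)_{A|B} = (a+b)cd(c+d), w(AB)_{A|C} = −bd(bc+ad), w(AB)_{A|D} = −bc(ac+bd), w(AB)_{B|C} = −ad(ac+bd), w(AB)_{B|D} = −ac(bc+ad), w(AB)_{C|D} = ab(a+b)(c+d). Then p_{AB} is orthogonal to each of δ_{A|B∪C∪D}, δ_{B|A∪C∪D}, δ_{C|A∪B∪D}, and δ_{D|A∪B∪C}. -/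

import Mathlib

open Finset
open scoped Classical

variable {X : Type*} [Fintype X] [DecidableEq X]

noncomputable def splitDelta (U V : Finset X) : EuclideanSpace ℝ (Sym2 X) :=
  WithLp.toLp 2 (fun s => if (∃ i ∈ s, i ∈ U) ∧ (∃ j ∈ s, j ∈ V) then 1 else 0)

lemma splitDelta_mk_one {U V : Finset X} {x y : X}
    (h : (x ∈ U ∧ y ∈ V) ∨ (x ∈ V ∧ y ∈ U)) :
    splitDelta U V (Sym2.mk x y) = 1 := by
  unfold splitDelta
  simp only [WithLp.ofLp_toLp]
  rw [if_pos]
  rcases h with ⟨hx, hy⟩ | ⟨hx, hy⟩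
  · exact ⟨⟨x, by simp, hx⟩, ⟨y, by simp, hy⟩⟩
  · exact ⟨⟨y, by simp, hy⟩, ⟨x, by simp, hx⟩⟩

lemma splitDelta_mk_zero {U V : Finset X} {x y : X}
    (hx : x ∉ U) (hy : y ∉ U) :
    splitDelta U V (Sym2.mk x y) = 0 := by
  unfold splitDelta
  simp only [WithLp.ofLp_toLp]
  rw [if_neg]
  rintro ⟨⟨i, hi, hiU⟩, -⟩
  rcases Sym2.mem_iff.mp hi with rfl | rfl
  · exact hx hiU
  · exact hy hiU

lemma inner_splitDelta (U V : Finset X) (hUV : Disjoint U V)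
    (g : EuclideanSpace ℝ (Sym2 X)) :
    (inner ℝ (splitDelta U V) g : ℝ) = ∑ u ∈ U, ∑ v ∈ V, g (Sym2.mk u v) := by
  have hfilter : (Finset.univ.filter
      (fun s : Sym2 X => (∃ i ∈ s, i ∈ U) ∧ (∃ j ∈ s, j ∈ V)))
      = (U ×ˢ V).image (fun p => Sym2.mk p.1 p.2) := by
    ext s
    induction s using Sym2.inductionOn with
    | hf x y =>
      simp only [mem_filter, mem_univ, true_and, mem_image, mem_product, Prod.exists]
      constructor
      · rintro ⟨⟨i, hi, hiU⟩, ⟨j, hj, hjV⟩⟩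
        rcases Sym2.mem_iff.mp hi with h1 | h1 <;>
          rcases Sym2.mem_iff.mp hj with h2 | h2
        · exact absurd (h2 ▸ hjV) (Finset.disjoint_left.mp hUV (h1 ▸ hiU))
        · exact ⟨x, y, ⟨h1 ▸ hiU, h2 ▸ hjV⟩, rfl⟩
        · exact ⟨y, x, ⟨h1 ▸ hiU, h2 ▸ hjV⟩, Sym2.eq_swap⟩
        · exact absurd (h2 ▸ hjV) (Finset.disjoint_left.mp hUV (h1 ▸ hiU))
      · rintro ⟨u, v, ⟨hu, hv⟩, heq⟩
        rw [← heq]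
        exact ⟨⟨u, by simp, hu⟩, ⟨v, by simp, hv⟩⟩
  have hinj : ∀ p ∈ U ×ˢ V, ∀ q ∈ U ×ˢ V,
      Sym2.mk p.1 p.2 = Sym2.mk q.1 q.2 → p = q := by
    rintro ⟨u, v⟩ hp ⟨u', v'⟩ hq h
    simp only [mem_product] at hp hq
    rcases Sym2.mk_eq_mk_iff.mp h with h | h
    · exact h
    · simp only [Prod.swap_prod_mk, Prod.mk.injEq] at h
      exact absurd hq.2 (Finset.disjoint_left.mp hUV (h.1 ▸ hp.1))
  calc (inner ℝ (splitDelta U V) g : ℝ)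
      = ∑ s : Sym2 X, splitDelta U V s * g s := by
        simp [PiLp.inner_apply, RCLike.inner_apply, mul_comm]
    _ = ∑ s : Sym2 X, if (∃ i ∈ s, i ∈ U) ∧ (∃ j ∈ s, j ∈ V) then g s else 0 := by
        apply Finset.sum_congr rfl
        intro s _
        unfold splitDelta
        simp only [WithLp.ofLp_toLp]
        split_ifs <;> simp
    _ = ∑ s ∈ Finset.univ.filter _, g s := (Finset.sum_filter _ _).symm
    _ = ∑ p ∈ U ×ˢ V, g (Sym2.mk p.1 p.2) := by rw [hfilter, Finset.sum_image hinj]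
    _ = ∑ u ∈ U, ∑ v ∈ V, g (Sym2.mk u v) := by rw [Finset.sum_product]

lemma sum_splitDelta_one {U V U' V' : Finset X}
    (h : ∀ u ∈ U, ∀ v ∈ V, (u ∈ U' ∧ v ∈ V') ∨ (u ∈ V' ∧ v ∈ U')) :
    ∑ u ∈ U, ∑ v ∈ V, splitDelta U' V' (Sym2.mk u v)
      = (U.card : ℝ) * V.card := by
  have step : ∑ u ∈ U, ∑ v ∈ V, splitDelta U' V' (Sym2.mk u v)
      = ∑ _u ∈ U, ∑ _v ∈ V, (1 : ℝ) :=
    Finset.sum_congr rfl (fun u hu => Finset.sum_congr rfl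
      (fun v hv => splitDelta_mk_one (h u hu v hv)))
  rw [step]
  simp [mul_comm]

lemma sum_splitDelta_zero {U V U' V' : Finset X}
    (h : ∀ u ∈ U, ∀ v ∈ V, u ∉ U' ∧ v ∉ U') :
    ∑ u ∈ U, ∑ v ∈ V, splitDelta U' V' (Sym2.mk u v) = 0 := by
  have step : ∑ u ∈ U, ∑ v ∈ V, splitDelta U' V' (Sym2.mk u v)
      = ∑ _u ∈ U, ∑ _v ∈ V, (0 : ℝ) :=
    Finset.sum_congr rfl (fun u hu => Finset.sum_congr rfl
      (fun v hv => splitDelta_mk_zero (h u hu v hv).1 (h u hu v hv).2))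
  rw [step]
  simp

/-- The vector p_{AB} = Σ w(AB)_{U|V}·δ_{U|V} is orthogonal to each of the four split
pseudometrics δ_{A|B∪C∪D}, δ_{B|A∪C∪D}, δ_{C|A∪B∪D}, δ_{D|A∪B∪C}. -/
theorem pAB_orthogonal_to_pendant_splits (A B C D : Finset X)
    (hA : A.Nonempty) (hB : B.Nonempty) (hC : C.Nonempty) (hD : D.Nonempty)
    (hAB : Disjoint A B) (hAC : Disjoint A C) (hAD : Disjoint A D)
    (hBC : Disjoint B C) (hBD : Disjoint B D) (hCD : Disjoint C D)
    (hcover : A ∪ B ∪ C ∪ D = Finset.univ) :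
    let a : ℝ := A.card; let b : ℝ := B.card; let c : ℝ := C.card; let d : ℝ := D.card
    let pAB := (((a + b) * c * d * (c + d)) • splitDelta A B +
        (-(b * d * (b * c + a * d))) • splitDelta A C +
        (-(b * c * (a * c + b * d))) • splitDelta A D +
        (-(a * d * (a * c + b * d))) • splitDelta B C +
        (-(a * c * (b * c + a * d))) • splitDelta B D +
        (a * b * (a + b) * (c + d)) • splitDelta C D : EuclideanSpace ℝ (Sym2 X))
    (inner ℝ pAB (splitDelta A (B ∪ C ∪ D)) : ℝ) = 0 ∧
    (inner ℝ pAB (splitDelta B (A ∪ C ∪ D)) : ℝ) = 0 ∧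
    (inner ℝ pAB (splitDelta C (A ∪ B ∪ D)) : ℝ) = 0 ∧
    (inner ℝ pAB (splitDelta D (A ∪ B ∪ C)) : ℝ) = 0 := by
  intro a b c d pAB
  have hAB' := Finset.disjoint_left.mp hAB
  have hAC' := Finset.disjoint_left.mp hAC
  have hAD' := Finset.disjoint_left.mp hAD
  have hBC' := Finset.disjoint_left.mp hBC
  have hBD' := Finset.disjoint_left.mp hBD
  have hCD' := Finset.disjoint_left.mp hCD
  have key : ∀ g : EuclideanSpace ℝ (Sym2 X),
      (inner ℝ pAB g : ℝ) =
        ((a + b) * c * d * (c + d)) * (∑ u ∈ A, ∑ v ∈ B, g (Sym2.mk u v)) +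
        (-(b * d * (b * c + a * d))) * (∑ u ∈ A, ∑ v ∈ C, g (Sym2.mk u v)) +
        (-(b * c * (a * c + b * d))) * (∑ u ∈ A, ∑ v ∈ D, g (Sym2.mk u v)) +
        (-(a * d * (a * c + b * d))) * (∑ u ∈ B, ∑ v ∈ C, g (Sym2.mk u v)) +
        (-(a * c * (b * c + a * d))) * (∑ u ∈ B, ∑ v ∈ D, g (Sym2.mk u v)) +
        (a * b * (a + b) * (c + d)) * (∑ u ∈ C, ∑ v ∈ D, g (Sym2.mk u v)) := by
    intro g
    simp only [pAB, inner_add_left, real_inner_smul_left,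
      inner_splitDelta A B hAB g, inner_splitDelta A C hAC g,
      inner_splitDelta A D hAD g, inner_splitDelta B C hBC g,
      inner_splitDelta B D hBD g, inner_splitDelta C D hCD g]
  have ha : (A.card : ℝ) = a := rfl
  have hb : (B.card : ℝ) = b := rfl
  have hc : (C.card : ℝ) = c := rfl
  have hd : (D.card : ℝ) = d := rfl
  refine ⟨?_, ?_, ?_, ?_⟩
  · rw [key,
      sum_splitDelta_one (fun u hu v hv => Or.inl ⟨hu, by simp [hv]⟩),
      sum_splitDelta_one (fun u hu v hv => Or.inl ⟨hu, by simp [hv]⟩),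
      sum_splitDelta_one (fun u hu v hv => Or.inl ⟨hu, by simp [hv]⟩),
      sum_splitDelta_zero (fun u hu v hv => ⟨fun h => hAB' h hu, fun h => hAC' h hv⟩),
      sum_splitDelta_zero (fun u hu v hv => ⟨fun h => hAB' h hu, fun h => hAD' h hv⟩),
      sum_splitDelta_zero (fun u hu v hv => ⟨fun h => hAC' h hu, fun h => hAD' h hv⟩)]
    rw [ha, hb, hc, hd]
    ring
  · rw [key,
      sum_splitDelta_one (fun u hu v hv => Or.inr ⟨by simp [hu], hv⟩),
      sum_splitDelta_zero (fun u hu v hv => ⟨fun h => hAB' hu h, fun h => hBC' h hv⟩),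
      sum_splitDelta_zero (fun u hu v hv => ⟨fun h => hAB' hu h, fun h => hBD' h hv⟩),
      sum_splitDelta_one (fun u hu v hv => Or.inl ⟨hu, by simp [hv]⟩),
      sum_splitDelta_one (fun u hu v hv => Or.inl ⟨hu, by simp [hv]⟩),
      sum_splitDelta_zero (fun u hu v hv => ⟨fun h => hBC' h hu, fun h => hBD' h hv⟩)]
    rw [ha, hb, hc, hd]
    ring
  · rw [key,
      sum_splitDelta_zero (fun u hu v hv => ⟨fun h => hAC' hu h, fun h => hBC' hv h⟩),
      sum_splitDelta_one (fun u hu v hv => Or.inr ⟨by simp [hu], hv⟩),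
      sum_splitDelta_zero (fun u hu v hv => ⟨fun h => hAC' hu h, fun h => hCD' h hv⟩),
      sum_splitDelta_one (fun u hu v hv => Or.inr ⟨by simp [hu], hv⟩),
      sum_splitDelta_zero (fun u hu v hv => ⟨fun h => hBC' hu h, fun h => hCD' h hv⟩),
      sum_splitDelta_one (fun u hu v hv => Or.inl ⟨hu, by simp [hv]⟩)]
    rw [ha, hb, hc, hd]
    ring
  · rw [key,
      sum_splitDelta_zero (fun u hu v hv => ⟨fun h => hAD' hu h, fun h => hBD' hv h⟩),
      sum_splitDelta_zero (fun u hu v hv => ⟨fun h => hAD' hu h, fun h => hCD' hv h⟩),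
      sum_splitDelta_one (fun u hu v hv => Or.inr ⟨by simp [hu], hv⟩),
      sum_splitDelta_zero (fun u hu v hv => ⟨fun h => hBD' hu h, fun h => hCD' hv h⟩),
      sum_splitDelta_one (fun u hu v hv => Or.inr ⟨by simp [hu], hv⟩),
      sum_splitDelta_one (fun u hu v hv => Or.inr ⟨by simp [hu], hv⟩)]
    rw [ha, hb, hc, hd]
    ring
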